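/- Assume hypotheses (H1) and (H2). If R₀ ≤ 1, then H(I) < 0 for every I with 0 < I ≤ I_max; consequently, the system has no endemic equilibrium when R₀ ≤ 1. -/

import Mathlib

/-- If R₀ ≤ 1 then H < 0 on (0, I_max], hence no endemic equilibrium. -/
theorem stmt_13
    (b μ β α c γ : ℝ)
    (hb : 0 < b) (hμ : 0 < μ) (hβ : 0 < β) (hα : 0 < α) (hc : 0 < c) (hγ : 0 < γ)
    (f : ℝ → ℝ → ℝ) (k : ℝ → ℝ)
    (hf_nonneg : ∀ S ≥ (0:ℝ), ∀ I ≥ (0:ℝ), 0 ≤ f S I)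
    (hf0S : ∀ I ≥ (0:ℝ), f 0 I = 0)
    (hf0I : ∀ S ≥ (0:ℝ), f S 0 = 0)
    -- (H1)
    (H1a : ∀ I > (0:ℝ), StrictMonoOn (fun S => f S I) (Set.Ici (0:ℝ)))
    (H1b : ∀ S ≥ (0:ℝ), MonotoneOn (fun I => f S I) (Set.Ioi (0:ℝ)))
    -- (H2)
    (H2a : ∀ S ≥ (0:ℝ), BddAbove ((fun I => f S I / I) '' Set.Ioi (0:ℝ)) ∧
      AntitoneOn (fun I => f S I / I) (Set.Ioi (0:ℝ)))
    (H2b : ∀ S ≥ (0:ℝ), Filter.Tendsto (fun I => f S I / I)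
      (nhdsWithin 0 (Set.Ioi 0)) (nhds (k S)))
    (hk_cont : ContinuousOn k (Set.Ici (0:ℝ)))
    (hk_mono : MonotoneOn k (Set.Ici (0:ℝ)))
    -- R₀ ≤ 1
    (hR0 : β * α * k (b / μ) / ((μ + α) * (μ + c + γ)) ≤ 1) :
    (∀ I : ℝ, 0 < I → I ≤ b * α / ((μ + α) * (μ + c + γ)) →
      β * f (b / μ - (μ + α) * (μ + c + γ) * I / (μ * α)) I / I
        - (μ + α) * (μ + c + γ) / α < 0) ∧
    ¬ ∃ Sstar Estar Istar : ℝ,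
        0 < Sstar ∧ 0 < Estar ∧ 0 < Istar ∧
        b = μ * Sstar + β * f Sstar Istar ∧
        β * f Sstar Istar = (μ + α) * Estar ∧
        α * Estar = (μ + c + γ) * Istar := by
  have hA : 0 < (μ + α) * (μ + c + γ) := by positivity
  have hS0 : (0:ℝ) ≤ b / μ := by positivity
  -- key: f S₀ I / I ≤ k S₀ for I > 0
  have hkey : ∀ I : ℝ, 0 < I → f (b/μ) I / I ≤ k (b/μ) := by
    intro I hI
    have hanti := (H2a _ hS0).2
    refine ge_of_tendsto (H2b _ hS0) ?_
    filter_upwards [Ioo_mem_nhdsGT hI] with J hJ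
    exact hanti (Set.mem_Ioi.mpr hJ.1) (Set.mem_Ioi.mpr (hJ.1.trans hJ.2)) hJ.2.le
  have hβk : β * k (b/μ) ≤ (μ + α) * (μ + c + γ) / α := by
    rw [div_le_one hA] at hR0
    rw [le_div_iff₀ hα]
    nlinarith
  have main : ∀ I : ℝ, 0 < I → I ≤ b * α / ((μ + α) * (μ + c + γ)) →
      β * f (b / μ - (μ + α) * (μ + c + γ) * I / (μ * α)) I / I
        - (μ + α) * (μ + c + γ) / α < 0 := by
    intro I hI hImax
    set S := b / μ - (μ + α) * (μ + c + γ) * I / (μ * α) with hSdef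
    have hImax' : I * ((μ + α) * (μ + c + γ)) ≤ b * α := by
      rw [le_div_iff₀ hA] at hImax; linarith
    have hSnn : 0 ≤ S := by
      rw [hSdef, sub_nonneg, div_le_div_iff₀ (by positivity) hμ]
      nlinarith
    have hSlt : S < b / μ := by
      have h : 0 < (μ + α) * (μ + c + γ) * I / (μ * α) := by positivity
      rw [hSdef]; linarith
    have hflt : f S I < f (b/μ) I := H1a I hI hSnn hS0 hSlt
    have h1 : β * f S I / I < β * f (b/μ) I / I := by
      have h : β * f S I < β * f (b/μ) I := by nlinarith
      exact div_lt_div_of_pos_right h hI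
    have h2 : β * f (b/μ) I / I ≤ (μ + α) * (μ + c + γ) / α := by
      have := hkey I hI
      calc β * f (b/μ) I / I = β * (f (b/μ) I / I) := by ring
        _ ≤ β * k (b/μ) := by nlinarith
        _ ≤ (μ + α) * (μ + c + γ) / α := hβk
    linarith
  refine ⟨main, ?_⟩
  rintro ⟨Ss, Es, Is, hSs, hEs, hIs, he1, he2, he3⟩
  have hfe : α * (β * f Ss Is) = (μ + α) * ((μ + c + γ) * Is) := by
    rw [he2, ← he3]; ring
  have hSeq : Ss = b / μ - (μ + α) * (μ + c + γ) * Is / (μ * α) := by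
    rw [div_sub_div _ _ hμ.ne' (by positivity), eq_div_iff (by positivity)]
    linear_combination (-(μ * α)) * he1 - μ * hfe
  have hImax : Is ≤ b * α / ((μ + α) * (μ + c + γ)) := by
    rw [le_div_iff₀ hA]
    have : 0 < b / μ - (μ + α) * (μ + c + γ) * Is / (μ * α) := hSeq ▸ hSs
    rw [sub_pos, div_lt_div_iff₀ (by positivity) hμ] at this
    nlinarith
  have := main Is hIs hImax
  rw [← hSeq] at this
  have hval : β * f Ss Is / Is = (μ + α) * (μ + c + γ) / α := by
    rw [div_eq_div_iff hIs.ne' hα.ne']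
    linear_combination hfe
  rw [hval] at this
  linarith
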